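/- For stack-heap models in separation logic with the precise semantics given, if (s,h) satisfies the separating conjunction ψ1 ∗ ψ2, and F1, F2 are supersets of the footprint sets FP_{(s,h)}(ψ1) and FP_{(s,h)}(ψ2) respectively, then there exist F1 ∈ 𝓕1 and F2 ∈ 𝓕2 with F1 ∩ F2 = ∅, F1 ∪ F2 = dom(h), (s, h|_{F1}) ⊨ ψ1, and (s, h|_{F2}) ⊨ ψ2. Conversely, the existence of such F1, F2 implies (s,h) ⊨ ψ1 ∗ ψ2. -/
import Mathlib


section

variable {Loc Val : Type*}

/-- Domain of a heap. -/
def hdom (h : Loc → Option Val) : Set Loc := {l | h l ≠ none}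

/-- Disjointness of heaps (disjoint domains). -/
def HDisj (h1 h2 : Loc → Option Val) : Prop := Disjoint (hdom h1) (hdom h2)

/-- Disjoint union of heaps (left-biased union, used under disjointness). -/
def hunion (h1 h2 : Loc → Option Val) : Loc → Option Val :=
  fun l => (h1 l).orElse (fun _ => h2 l)

open Classical in
/-- Restriction of a heap to a set of locations. -/
noncomputable def hrestrict (h : Loc → Option Val) (F : Set Loc) : Loc → Option Val :=
  fun l => if l ∈ F then h l else none

/-- Semantics of separating conjunction (for a fixed stack, a formula is just a
predicate on heaps). -/
def SepStar (P1 P2 : (Loc → Option Val) → Prop) (h : Loc → Option Val) : Prop :=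
  ∃ h1 h2, HDisj h1 h2 ∧ h = hunion h1 h2 ∧ P1 h1 ∧ P2 h2

/-- Footprints of a formula `P` in the model with heap `h`. -/
def FP (P : (Loc → Option Val) → Prop) (h : Loc → Option Val) : Set (Set Loc) :=
  {F | F ⊆ hdom h ∧ P (hrestrict h F)}

/-- Separating conjunction can be checked on any supersets of the footprint
sets of its operands. -/
theorem stmt3 (P1 P2 : (Loc → Option Val) → Prop) (h : Loc → Option Val)
    (F1s F2s : Set (Set Loc)) (hF1 : FP P1 h ⊆ F1s) (hF2 : FP P2 h ⊆ F2s) :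
    SepStar P1 P2 h ↔
      ∃ F1 ∈ F1s, ∃ F2 ∈ F2s, F1 ∩ F2 = ∅ ∧ F1 ∪ F2 = hdom h ∧
        P1 (hrestrict h F1) ∧ P2 (hrestrict h F2) := by
  constructor
  · rintro ⟨h1, h2, hd, rfl, hp1, hp2⟩
    have hdis : ∀ l, h1 l ≠ none → h2 l = none := by
      intro l hl
      by_contra hl2
      exact (Set.disjoint_left.mp hd hl hl2)
    have hr1 : hrestrict (hunion h1 h2) (hdom h1) = h1 := by
      funext l
      simp only [hrestrict, hdom, hunion, Set.mem_setOf_eq]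
      by_cases hl : h1 l = none
      · simp [hl]
      · obtain ⟨v, hv⟩ := Option.ne_none_iff_exists'.mp hl
        simp [hl, hv]
    have hr2 : hrestrict (hunion h1 h2) (hdom h2) = h2 := by
      funext l
      simp only [hrestrict, hdom, hunion, Set.mem_setOf_eq]
      by_cases hl : h2 l = none
      · simp [hl]
      · have h1n : h1 l = none := by
          by_contra h1n
          exact hl (hdis l h1n)
        simp [hl, h1n]
    have hsub1 : hdom h1 ⊆ hdom (hunion h1 h2) := by
      intro l hl
      obtain ⟨v, hv⟩ := Option.ne_none_iff_exists'.mp hl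
      simp [hdom, hunion, hv]
    have hsub2 : hdom h2 ⊆ hdom (hunion h1 h2) := by
      intro l hl
      simp only [hdom, hunion, Set.mem_setOf_eq] at *
      cases h1l : h1 l <;> simp [h1l, hl]
    have hq1 : P1 (hrestrict (hunion h1 h2) (hdom h1)) := by rw [hr1]; exact hp1
    have hq2 : P2 (hrestrict (hunion h1 h2) (hdom h2)) := by rw [hr2]; exact hp2
    refine ⟨hdom h1, hF1 ⟨hsub1, hq1⟩, hdom h2, hF2 ⟨hsub2, hq2⟩,
      Set.disjoint_iff_inter_eq_empty.mp hd, ?_, hq1, hq2⟩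
    apply Set.Subset.antisymm (Set.union_subset hsub1 hsub2)
    intro l hl
    simp only [hdom, hunion, Set.mem_setOf_eq, Set.mem_union] at *
    cases h1l : h1 l with
    | none => right; simpa [h1l] using hl
    | some v => left; simp [h1l]
  · rintro ⟨F1, hF1m, F2, hF2m, hint, huni, hp1, hp2⟩
    refine ⟨hrestrict h F1, hrestrict h F2, ?_, ?_, hp1, hp2⟩
    · apply Set.disjoint_left.mpr
      intro l hl hl2
      simp only [hdom, hrestrict, Set.mem_setOf_eq] at hl hl2
      by_cases h1 : l ∈ F1 <;> by_cases h2 : l ∈ F2 <;> simp_all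
      exact Set.eq_empty_iff_forall_notMem.mp hint l ⟨h1, h2⟩
    · funext l
      simp only [hunion, hrestrict]
      by_cases h1 : l ∈ F1
      · cases hv : h l <;> simp [h1, hv]
      · by_cases h2 : l ∈ F2
        · simp [h1, h2]
        · have : l ∉ hdom h := by rw [← huni]; simp [h1, h2]
          simp only [hdom, Set.mem_setOf_eq, not_not] at this
          simp [h1, h2, this]

end
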